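/- Euler's transformation for the hypergeometric function: for |x| < 1 and admissible parameters, ₂F₁(σ1, σ2, σ3; x) = (1−x)^{σ3−σ1−σ2} · ₂F₁(σ3−σ1, σ3−σ2, σ3; x). -/

import Mathlib

/-- Pochhammer symbol `(z)ₙ = z (z+1) ⋯ (z+n-1)` for real `z`. -/
noncomputable def poch (z : ℝ) (n : ℕ) : ℝ := ∏ i ∈ Finset.range n, (z + i)

open Filter Topology

lemma poch_zero (z : ℝ) : poch z 0 = 1 := by simp [poch]

lemma poch_succ (z : ℝ) (n : ℕ) : poch z (n + 1) = poch z n * (z + n) := by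
  simp [poch, Finset.prod_range_succ]

lemma tendsto_ratio (p q : ℝ) :
    Tendsto (fun n : ℕ => (p + n) / (q + n)) atTop (𝓝 1) := by
  have h1 : Tendsto (fun n : ℕ => q + (n : ℝ)) atTop atTop :=
    tendsto_atTop_add_const_left _ q tendsto_natCast_atTop_atTop
  have h2 : Tendsto (fun n : ℕ => (p - q) / (q + (n : ℝ))) atTop (𝓝 0) :=
    Tendsto.div_atTop tendsto_const_nhds h1
  have h3 : Tendsto (fun n : ℕ => 1 + (p - q) / (q + (n : ℝ))) atTop (𝓝 1) := by
    simpa using h2.const_add 1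
  apply h3.congr'
  filter_upwards [h1.eventually_gt_atTop 0] with n hn
  field_simp
  ring

/-- Ratio test packaged for our series. -/
lemma summable_norm_aux {x : ℝ} (hx : |x| < 1) (g : ℕ → ℝ) (f : ℕ → ℝ)
    (hrec : ∀ n, f (n + 1) = f n * (x * g n))
    (hg : Tendsto (fun n => |g n|) atTop (𝓝 1)) :
    Summable fun n => ‖f n‖ := by
  have habs : 0 ≤ |x| := abs_nonneg x
  apply summable_of_ratio_norm_eventually_le (r := (1 + |x|) / 2) (by linarith)
  have hten : Tendsto (fun n => |x| * |g n|) atTop (𝓝 |x|) := by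
    simpa using (hg.const_mul |x|)
  have hev : ∀ᶠ n in atTop, |x| * |g n| < (1 + |x|) / 2 :=
    hten.eventually_lt_const (by linarith)
  filter_upwards [hev] with n hn
  have : ‖f (n + 1)‖ = (|x| * |g n|) * ‖f n‖ := by
    rw [hrec n]; simp [abs_mul]; ring
  simp only [norm_norm]
  rw [this]
  exact mul_le_mul_of_nonneg_right hn.le (abs_nonneg _)

noncomputable def coef (c p q : ℝ) (n : ℕ) : ℝ :=
  poch p n * poch q n / (poch c n * n.factorial)

noncomputable def dco (t : ℝ) (n : ℕ) : ℝ := poch t n / n.factorial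

section
variable {c : ℝ} (hc : ∀ m : ℕ, c ≠ -(m : ℝ))
include hc

lemma c_add_ne (n : ℕ) : c + (n : ℝ) ≠ 0 := by
  intro h
  exact hc n (by linarith)

lemma poch_c_ne_zero (n : ℕ) : poch c n ≠ 0 := by
  apply Finset.prod_ne_zero_iff.2
  intro i _
  exact c_add_ne hc i

lemma coef_succ (p q : ℝ) (n : ℕ) :
    coef c p q (n + 1) = coef c p q n * ((p + n) * (q + n) / ((c + n) * (n + 1))) := by
  have h1 : poch c n ≠ 0 := poch_c_ne_zero hc n
  have h2 : c + (n : ℝ) ≠ 0 := c_add_ne hc n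
  have h3 : (n.factorial : ℝ) ≠ 0 := Nat.cast_ne_zero.2 n.factorial_ne_zero
  have h4 : ((n : ℝ) + 1) ≠ 0 := by positivity
  simp only [coef, poch_succ, Nat.factorial_succ, Nat.cast_mul, Nat.cast_add, Nat.cast_one]
  field_simp

end

lemma coef_zero (c p q : ℝ) : coef c p q 0 = 1 := by simp [coef, poch]

lemma dco_zero (t : ℝ) : dco t 0 = 1 := by simp [dco, poch]

lemma dco_succ (t : ℝ) (n : ℕ) : dco t (n + 1) = dco t n * ((t + n) / (n + 1)) := by
  have h3 : (n.factorial : ℝ) ≠ 0 := Nat.cast_ne_zero.2 n.factorial_ne_zero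
  have h4 : ((n : ℝ) + 1) ≠ 0 := by positivity
  simp only [dco, poch_succ, Nat.factorial_succ, Nat.cast_mul, Nat.cast_add, Nat.cast_one]
  field_simp

lemma summable_norm_coef {c : ℝ} (hc : ∀ m : ℕ, c ≠ -(m : ℝ)) (p q : ℝ) {x : ℝ}
    (hx : |x| < 1) : Summable fun n => ‖coef c p q n * x ^ n‖ := by
  apply summable_norm_aux hx (fun n => (p + n) * (q + n) / ((c + n) * (n + 1)))
  · intro n
    rw [coef_succ hc, pow_succ]
    ring
  · have h : ∀ n : ℕ, (p + n) * (q + n) / ((c + n) * (n + 1)) =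
        ((p + n) / (1 + n)) * ((q + n) / (c + n)) := by
      intro n
      have h2 : c + (n : ℝ) ≠ 0 := c_add_ne hc n
      have h4 : (1 : ℝ) + n ≠ 0 := by positivity
      field_simp
      ring_nf
    simp only [h, abs_mul]
    have := ((tendsto_ratio p 1).abs.mul (tendsto_ratio q c).abs)
    simpa using this

lemma summable_norm_dco (t : ℝ) {x : ℝ} (hx : |x| < 1) :
    Summable fun n => ‖dco t n * x ^ n‖ := by
  apply summable_norm_aux hx (fun n => (t + n) / (1 + n))
  · intro n
    rw [dco_succ, pow_succ]
    ring
  · simpa using (tendsto_ratio t 1).abs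

lemma summable_norm_dco' (t : ℝ) {x : ℝ} (hx : |x| < 1) :
    Summable fun n => ‖(t + n) * dco t n * x ^ n‖ := by
  apply summable_norm_aux hx (fun n => (t + 1 + n) / (1 + n))
  · intro n
    rw [dco_succ, pow_succ]
    have h4 : ((n : ℝ) + 1) ≠ 0 := by positivity
    push_cast
    field_simp
    ring
  · simpa using (tendsto_ratio (t + 1) 1).abs

lemma conv_eq {c : ℝ} (hc : ∀ m : ℕ, c ≠ -(m : ℝ)) (a b : ℝ) (n : ℕ) :
    ∑ k ∈ Finset.range (n + 1), coef c (c - a) (c - b) k * dco (a + b - c) (n - k)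
      = coef c a b n := by
  induction n with
  | zero => simp [coef_zero, dco_zero]
  | succ n ih =>
    set t := a + b - c with ht
    set B := coef c (c - a) (c - b) with hB
    have key : ∀ k, k ≤ n →
        ((n : ℝ) + 1) * ((n : ℝ) + c) * (B k * dco t (n + 1 - k))
          = ((n : ℝ) + a) * ((n : ℝ) + b) * (B k * dco t (n - k))
            + (((k : ℝ) * ((k : ℝ) - 1 + c) * B k * dco t (n + 1 - k))
               - (((k : ℝ) + 1) * (((k : ℝ) + 1) - 1 + c) * B (k + 1) * dco t (n - k))) := by
      intro k hk
      obtain ⟨j, rfl⟩ : ∃ j, n = k + j := ⟨n - k, (Nat.add_sub_cancel' hk).symm⟩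
      have e1 : k + j + 1 - k = j + 1 := by omega
      have e2 : k + j - k = j := by omega
      rw [e1, e2]
      have hd : dco t (j + 1) = dco t j * ((t + j) / (j + 1)) := dco_succ t j
      have hb : B (k + 1) = B k * (((c - a) + k) * ((c - b) + k) / ((c + k) * (k + 1))) :=
        coef_succ hc _ _ k
      rw [hd, hb]
      have h1 : ((j : ℝ) + 1) ≠ 0 := by positivity
      have h2 : ((k : ℝ) + 1) ≠ 0 := by positivity
      have h3 : c + (k : ℝ) ≠ 0 := c_add_ne hc k
      push_cast [ht]
      field_simp
      ring
    have h1 : ((n : ℝ) + 1) ≠ 0 := by positivity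
    have h2 : ((n : ℝ) + c) ≠ 0 := by
      have := c_add_ne hc n; intro h; apply this; linarith
    set s : ℕ → ℝ := fun k => (k : ℝ) * ((k : ℝ) - 1 + c) * B k * dco t (n + 1 - k) with hs
    have hsum : ((n : ℝ) + 1) * ((n : ℝ) + c)
          * ∑ k ∈ Finset.range (n + 2), B k * dco t (n + 1 - k)
        = ((n : ℝ) + a) * ((n : ℝ) + b)
          * ∑ k ∈ Finset.range (n + 1), B k * dco t (n - k) := by
      rw [Finset.sum_range_succ, mul_add, Finset.mul_sum, Finset.mul_sum]
      have tele : ∀ k ∈ Finset.range (n + 1),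
          ((n : ℝ) + 1) * ((n : ℝ) + c) * (B k * dco t (n + 1 - k))
            = ((n : ℝ) + a) * ((n : ℝ) + b) * (B k * dco t (n - k)) + (s k - s (k + 1)) := by
        intro k hk
        have hk' : k ≤ n := Nat.lt_succ_iff.1 (Finset.mem_range.1 hk)
        have := key k hk'
        rw [this]
        congr 1
        simp only [hs]
        push_cast
        ring_nf
      rw [Finset.sum_congr rfl tele, Finset.sum_add_distrib, Finset.sum_range_sub']
      have hs0 : s 0 = 0 := by simp [hs]
      have hsn : s (n + 1) = ((n : ℝ) + 1) * ((n : ℝ) + c) * (B (n + 1) * dco t (n + 1 - (n + 1))) := by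
        simp only [hs, Nat.sub_self]
        push_cast
        ring
      rw [hs0, hsn]
      ring
    apply mul_left_cancel₀ (mul_ne_zero h1 h2)
    rw [hsum, ih, coef_succ hc a b n]
    have h2' : c + (n : ℝ) ≠ 0 := c_add_ne hc n
    field_simp
    ring

lemma dco_mul (t : ℝ) (n : ℕ) : ((n : ℝ) + 1) * dco t (n + 1) = (t + n) * dco t n := by
  rw [dco_succ]
  have h : ((n : ℝ) + 1) ≠ 0 := by positivity
  field_simp

lemma shift_eq (t y : ℝ) (n : ℕ) :
    dco t (n + 1) * ((((n : ℕ) + 1 : ℕ) : ℝ) * y ^ n) = (t + n) * dco t n * y ^ n := by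
  have h := dco_mul t n
  push_cast
  linear_combination y ^ n * h

lemma summable_deriv_terms (t : ℝ) {y : ℝ} (hy : |y| < 1) :
    Summable fun n => dco t n * ((n : ℝ) * y ^ (n - 1)) := by
  rw [← summable_nat_add_iff 1]
  apply ((summable_norm_dco' t hy).of_norm).congr
  intro n
  simp only [Nat.add_sub_cancel]
  rw [← shift_eq t y n]

/-- The functional relation `(1-y) * G y = t * g y`. -/
lemma deriv_relation (t : ℝ) {y : ℝ} (hy : |y| < 1) :
    (1 - y) * (∑' n : ℕ, dco t n * ((n : ℝ) * y ^ (n - 1)))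
      = t * ∑' n : ℕ, dco t n * y ^ n := by
  have Sg : Summable fun n : ℕ => dco t n * y ^ n := (summable_norm_dco t hy).of_norm
  have SA : Summable fun n : ℕ => (t + n) * dco t n * y ^ n := (summable_norm_dco' t hy).of_norm
  have SG : Summable fun n : ℕ => dco t n * ((n : ℝ) * y ^ (n - 1)) :=
    summable_deriv_terms t hy
  have Sn : Summable fun n : ℕ => (n : ℝ) * dco t n * y ^ n := by
    apply (SA.sub (Sg.mul_left t)).congr
    intro n; ring
  have hG : (∑' n : ℕ, dco t n * ((n : ℝ) * y ^ (n - 1)))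
      = ∑' n : ℕ, (t + n) * dco t n * y ^ n := by
    rw [Summable.tsum_eq_zero_add SG]
    simp only [Nat.cast_zero, zero_mul, mul_zero, zero_add, Nat.add_sub_cancel]
    exact tsum_congr fun n => shift_eq t y n
  have hB : (∑' n : ℕ, (n : ℝ) * dco t n * y ^ n)
      = (∑' n : ℕ, (t + n) * dco t n * y ^ n) * y := by
    rw [Summable.tsum_eq_zero_add Sn, ← tsum_mul_right]
    simp only [Nat.cast_zero, zero_mul, zero_add]
    apply tsum_congr
    intro n
    push_cast
    linear_combination (y ^ n * y) * dco_mul t n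
  have hA : (∑' n : ℕ, (t + n) * dco t n * y ^ n)
      = t * (∑' n : ℕ, dco t n * y ^ n) + ∑' n : ℕ, (n : ℝ) * dco t n * y ^ n := by
    rw [← tsum_mul_left, ← Summable.tsum_add (Sg.mul_left t) Sn]
    apply tsum_congr; intro n; ring
  rw [hG]
  linear_combination hA + hB

/-- Binomial series. -/
lemma binomial_series (t : ℝ) {x : ℝ} (hx : |x| < 1) :
    ∑' n : ℕ, dco t n * x ^ n = (1 - x) ^ (-t) := by
  set r : ℝ := (|x| + 1) / 2 with hrdef
  have habs : 0 ≤ |x| := abs_nonneg x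
  have hr1 : r < 1 := by rw [hrdef]; linarith
  have hr0 : 0 < r := by rw [hrdef]; linarith
  have hxr : |x| < r := by rw [hrdef]; linarith
  have hrabs : |r| < 1 := by rw [abs_of_pos hr0]; exact hr1
  have hxs : x ∈ Set.Ioo (-r) r := by
    have := abs_lt.1 hxr; exact ⟨this.1, this.2⟩
  have h0s : (0 : ℝ) ∈ Set.Ioo (-r) r := ⟨by linarith, hr0⟩
  set u : ℕ → ℝ := fun n => ‖dco t n * ((n : ℝ) * r ^ (n - 1))‖ with hu_def
  have hu : Summable u := (summable_deriv_terms t hrabs).abs.congr (fun n => by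
    simp [hu_def, abs_mul, abs_pow, Nat.abs_cast])
  have hbound : ∀ (n : ℕ) (y : ℝ), y ∈ Set.Ioo (-r) r →
      ‖dco t n * ((n : ℝ) * y ^ (n - 1))‖ ≤ u n := by
    intro n y hy
    have hyr : |y| ≤ |r| := by
      rw [abs_of_pos hr0]
      exact (abs_lt.2 ⟨hy.1, hy.2⟩).le
    simp only [hu_def, norm_mul, Real.norm_eq_abs, abs_pow]
    gcongr
  have hderiv : ∀ (n : ℕ) (y : ℝ), y ∈ Set.Ioo (-r) r →
      HasDerivAt (fun z => dco t n * z ^ n) (dco t n * ((n : ℝ) * y ^ (n - 1))) y :=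
    fun n y _ => (hasDerivAt_pow n y).const_mul (dco t n)
  have hf0 : Summable fun n : ℕ => dco t n * x ^ n := (summable_norm_dco t hx).of_norm
  have key : ∀ y ∈ Set.Ioo (-r) r,
      HasDerivAt (fun z => ∑' n : ℕ, dco t n * z ^ n)
        (∑' n : ℕ, dco t n * ((n : ℝ) * y ^ (n - 1))) y := by
    intro y hy
    exact hasDerivAt_tsum_of_isPreconnected hu isOpen_Ioo isPreconnected_Ioo
      hderiv hbound hxs hf0 hy
  set h : ℝ → ℝ := fun y => (∑' n : ℕ, dco t n * y ^ n) * (1 - y) ^ t with hh_def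
  have hder : ∀ y ∈ Set.Ioo (-r) r, HasDerivAt h 0 y := by
    intro y hy
    have hy1 : |y| < 1 := lt_trans (abs_lt.2 ⟨hy.1, hy.2⟩) hr1
    have hpos : (0 : ℝ) < 1 - y := by
      have := (abs_lt.1 hy1).2; linarith
    have d1 : HasDerivAt (fun z : ℝ => (1 - z) ^ t) (t * (1 - y) ^ (t - 1) * (-1)) y := by
      have inner : HasDerivAt (fun z : ℝ => 1 - z) (-1) y := (hasDerivAt_id y).const_sub 1
      exact (Real.hasDerivAt_rpow_const (Or.inl hpos.ne')).comp y inner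
    have d2 := (key y hy).mul d1
    have hval : (∑' n : ℕ, dco t n * ((n : ℝ) * y ^ (n - 1))) * (1 - y) ^ t
        + (∑' n : ℕ, dco t n * y ^ n) * (t * (1 - y) ^ (t - 1) * (-1)) = 0 := by
      have e : (1 - y) ^ t = (1 - y) ^ (t - 1) * (1 - y) := by
        conv_lhs => rw [show t = t - 1 + 1 by ring]
        rw [Real.rpow_add hpos, Real.rpow_one]
      rw [e]
      have hrel := deriv_relation t hy1
      linear_combination (1 - y) ^ (t - 1) * hrel
    rw [hval] at d2
    exact d2
  have hconst : h x = h 0 := by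
    have hdiff : DifferentiableOn ℝ h (Set.Ioo (-r) r) :=
      fun y hy => (hder y hy).differentiableAt.differentiableWithinAt
    apply (convex_Ioo (-r) r).is_const_of_fderivWithin_eq_zero hdiff ?_ hxs h0s
    intro y hy
    rw [fderivWithin_of_isOpen isOpen_Ioo hy, (hder y hy).hasFDerivAt.fderiv]
    ext
    simp
  have hpos : (0 : ℝ) < 1 - x := by
    have := (abs_lt.1 hx).2; linarith
  have hx0 : h 0 = 1 := by
    rw [hh_def]
    simp only [sub_zero, Real.one_rpow, mul_one]
    rw [tsum_eq_single 0 (fun n hn => by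
      simp [zero_pow hn])]
    simp [dco_zero]
  have hne : (1 - x) ^ t ≠ 0 := (Real.rpow_pos_of_pos hpos t).ne'
  have hone : (∑' n : ℕ, dco t n * x ^ n) * (1 - x) ^ t = 1 := by
    change h x = 1
    rw [hconst, hx0]
  rw [Real.rpow_neg hpos.le, inv_eq_one_div]
  exact eq_div_of_mul_eq hne hone

/-- Gauss hypergeometric function `₂F₁(σ1, σ2, σ3; x)` via its power series. -/
noncomputable def hyp2F1 (σ1 σ2 σ3 x : ℝ) : ℝ :=
  ∑' n : ℕ, poch σ1 n * poch σ2 n / (poch σ3 n * n.factorial) * x ^ n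

theorem hyp2F1_euler_transform (σ1 σ2 σ3 x : ℝ)
    (hσ3 : ∀ m : ℕ, σ3 ≠ -(m : ℝ)) (hx : |x| < 1) :
    hyp2F1 σ1 σ2 σ3 x = (1 - x) ^ (σ3 - σ1 - σ2) * hyp2F1 (σ3 - σ1) (σ3 - σ2) σ3 x := by
  have hbin : (1 - x) ^ (σ3 - σ1 - σ2) = ∑' n : ℕ, dco (σ1 + σ2 - σ3) n * x ^ n := by
    rw [show σ3 - σ1 - σ2 = -(σ1 + σ2 - σ3) by ring, ← binomial_series _ hx]
  have Sd := summable_norm_dco (σ1 + σ2 - σ3) hx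
  have Sb := summable_norm_coef hσ3 (σ3 - σ1) (σ3 - σ2) hx
  have hh : hyp2F1 (σ3 - σ1) (σ3 - σ2) σ3 x
      = ∑' n : ℕ, coef σ3 (σ3 - σ1) (σ3 - σ2) n * x ^ n := rfl
  rw [hbin, hh, mul_comm,
    tsum_mul_tsum_eq_tsum_sum_range_of_summable_norm Sb Sd]
  show hyp2F1 σ1 σ2 σ3 x = _
  have : ∀ n : ℕ, ∑ k ∈ Finset.range (n + 1),
      (coef σ3 (σ3 - σ1) (σ3 - σ2) k * x ^ k) * (dco (σ1 + σ2 - σ3) (n - k) * x ^ (n - k))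
        = coef σ3 σ1 σ2 n * x ^ n := by
    intro n
    have hstep : ∀ k ∈ Finset.range (n + 1),
        (coef σ3 (σ3 - σ1) (σ3 - σ2) k * x ^ k) * (dco (σ1 + σ2 - σ3) (n - k) * x ^ (n - k))
          = (coef σ3 (σ3 - σ1) (σ3 - σ2) k * dco (σ1 + σ2 - σ3) (n - k)) * x ^ n := by
      intro k hk
      have hk' : k ≤ n := Nat.lt_succ_iff.1 (Finset.mem_range.1 hk)
      rw [show (coef σ3 (σ3 - σ1) (σ3 - σ2) k * x ^ k) * (dco (σ1 + σ2 - σ3) (n - k) * x ^ (n - k))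
          = (coef σ3 (σ3 - σ1) (σ3 - σ2) k * dco (σ1 + σ2 - σ3) (n - k)) * (x ^ k * x ^ (n - k))
          by ring, ← pow_add, Nat.add_sub_cancel' hk']
    rw [Finset.sum_congr rfl hstep, ← Finset.sum_mul, conv_eq hσ3 σ1 σ2 n]
  rw [tsum_congr this]
  rfl
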